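/- The unital ℂ-subalgebra of the algebra of ℂ-linear endomorphisms of Λp generated by the partial derivative operators {∂/∂p_k : k ≥ 1} equals the unital ℂ-subalgebra generated by the operators {T_n : n ≥ 1}. Moreover, for every n ≥ 1 the two subalgebras generated by {∂/∂p_1, …, ∂/∂p_n} and by {T_1, …, T_n} respectively coincide. -/

import Mathlib

open MvPolynomial

/-- `Λp = ℂ[p_1, p_2, …]`, polynomials in variables `p_k` indexed by `k ∈ ℕ+`. -/
abbrev LambdaP : Type := MvPolynomial ℕ+ ℂ

/-- `φ : Λp → Λp[x]`, the ℂ-algebra homomorphism with `φ(p_k) = p_k + x^k`. -/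
noncomputable def phiMap : LambdaP →ₐ[ℂ] Polynomial LambdaP :=
  aeval (fun k : ℕ+ => Polynomial.C (X k) + Polynomial.X ^ (k : ℕ))

/-- `T_n(f) = n! ⋅ (coefficient of x^n in φ(f))`. -/
noncomputable def T (n : ℕ) : Module.End ℂ LambdaP :=
  (n.factorial : ℂ) •
    (((Polynomial.lcoeff LambdaP n).restrictScalars ℂ).comp phiMap.toLinearMap)

/-- The partial derivative operator `∂/∂p_k` as a ℂ-linear endomorphism of `Λp`. -/
noncomputable def D (k : ℕ+) : Module.End ℂ LambdaP :=
  (pderiv k).toLinearMap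


lemma phiMap_X (k : ℕ+) : phiMap (X k) = Polynomial.C (X k) + Polynomial.X ^ (k : ℕ) := by
  simp [phiMap]

/-- chain rule for `phiMap` over any finset containing the variables. -/
lemma deriv_phiMap (s : Finset ℕ+) (f : LambdaP) (hf : f ∈ supported ℂ (↑s : Set ℕ+)) :
    Polynomial.derivative (phiMap f) =
      ∑ k ∈ s, (k : ℕ) • (Polynomial.X ^ ((k : ℕ) - 1) * phiMap (pderiv k f)) := by
  rw [supported_eq_adjoin_X] at hf
  induction hf using Algebra.adjoin_induction with
  | mem x hx =>
      obtain ⟨k, hk, rfl⟩ := hx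
      rw [phiMap_X]
      classical
      rw [Finset.sum_eq_single k]
      · simp [pderiv_X_self, Polynomial.derivative_X_pow, mul_comm,
          Polynomial.C_eq_natCast, nsmul_eq_mul]
      · intro b hb hbk
        rw [pderiv_X, Pi.single_eq_of_ne (Ne.symm hbk)]
        simp
      · intro hk'; exact absurd hk hk'
  | algebraMap r =>
      have : phiMap (algebraMap ℂ LambdaP r) = Polynomial.C (C r) := by
        simp only [phiMap, AlgHom.commutes]
        rfl
      simp [this, (pderiv _).map_algebraMap]
  | add x y hx hy ihx ihy =>
      simp only [map_add, ihx, ihy, ← Finset.sum_add_distrib, smul_add, mul_add]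
  | mul x y hx hy ihx ihy =>
      simp only [map_mul, Polynomial.derivative_mul, ihx, ihy, pderiv_mul, map_add,
        mul_add, smul_add, Finset.sum_add_distrib, Finset.sum_mul, Finset.mul_sum]
      congr 1
      · exact Finset.sum_congr rfl fun k _ => by rw [smul_mul_assoc, mul_assoc]
      · exact Finset.sum_congr rfl fun k _ => by rw [mul_smul_comm, mul_left_comm]

lemma coeff_rec (n : ℕ) (f : LambdaP) :
    (n + 1) • (phiMap f).coeff (n + 1) =
      ∑ j ∈ Finset.range (n + 1),
        (j + 1) • (phiMap (pderiv (⟨j + 1, j.succ_pos⟩ : ℕ+) f)).coeff (n - j) := by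
  classical
  set t : Finset ℕ+ := (Finset.range (n + 1)).image (fun j => (⟨j + 1, j.succ_pos⟩ : ℕ+)) with ht
  set s : Finset ℕ+ := f.vars ∪ t with hs
  have hf : f ∈ supported ℂ (↑s : Set ℕ+) :=
    supported_mono (by exact_mod_cast Finset.subset_union_left (s₂ := t)) (mem_supported_vars f)
  have h := congrArg (fun p => Polynomial.coeff p n) (deriv_phiMap s f hf)
  simp only [Polynomial.coeff_derivative, Polynomial.finset_sum_coeff,
    Polynomial.coeff_smul, Polynomial.coeff_X_pow_mul'] at h
  have hL : (phiMap f).coeff (n + 1) * (n + 1 : LambdaP) = (n + 1) • (phiMap f).coeff (n + 1) := by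
    rw [nsmul_eq_mul, mul_comm]; push_cast; ring
  rw [hL] at h
  rw [h]
  -- restrict sum from s to t
  rw [← Finset.sum_subset (Finset.subset_union_right (s₁ := f.vars))
    (by
      intro k hk hkt
      have hk2 : ¬ ((k : ℕ) - 1 ≤ n) := by
        by_contra hle
        apply hkt
        rw [ht]; refine Finset.mem_image.2 ?_
        refine ⟨(k : ℕ) - 1, Finset.mem_range.2 (Nat.lt_succ_of_le hle), ?_⟩
        exact PNat.coe_injective (by simp [Nat.sub_add_cancel k.one_le, Nat.succ_le_iff, k.pos])
      rw [if_neg hk2, smul_zero])]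
  rw [ht]; erw [Finset.sum_image (by
    intro a _ b _ hab
    have := congrArg (fun x : ℕ+ => (x : ℕ)) hab
    simpa using this)]
  refine Finset.sum_congr rfl fun j hj => ?_
  have hjn : j ≤ n := Nat.lt_succ_iff.mp (Finset.mem_range.mp hj)
  rw [if_pos]
  · congr 1
  · simpa using hjn

noncomputable def Cop (n : ℕ) : Module.End ℂ LambdaP :=
  ((Polynomial.lcoeff LambdaP n).restrictScalars ℂ).comp phiMap.toLinearMap

lemma T_eq (n : ℕ) : T n = (n.factorial : ℂ) • Cop n := rfl

lemma Cop_eq (n : ℕ) : Cop n = ((n.factorial : ℂ))⁻¹ • T n := by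
  rw [T_eq, smul_smul, inv_mul_cancel₀ (by exact_mod_cast n.factorial_ne_zero), one_smul]

lemma Cop_zero : Cop 0 = 1 := by
  have key : ∀ f : LambdaP, Polynomial.eval 0 (phiMap f) = f := by
    have : (Polynomial.evalRingHom (0 : LambdaP)).comp
        (phiMap : LambdaP →+* Polynomial LambdaP) = RingHom.id LambdaP := by
      apply MvPolynomial.ringHom_ext
      · intro c
        simp [phiMap]
      · intro k
        simp [phiMap, zero_pow (by exact_mod_cast k.pos.ne' : (k : ℕ) ≠ 0)]
    intro f
    exact RingHom.congr_fun this f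
  apply LinearMap.ext
  intro f
  simp [Cop, Polynomial.coeff_zero_eq_eval_zero, key f]

lemma op_rec (n : ℕ) :
    ((n : ℂ) + 1) • Cop (n + 1) =
      ∑ j ∈ Finset.range (n + 1),
        ((j : ℂ) + 1) • (Cop (n - j) * D (⟨j + 1, j.succ_pos⟩ : ℕ+)) := by
  apply LinearMap.ext
  intro f
  have h := coeff_rec n f
  have cast1 : ∀ (m : ℕ) (z : LambdaP), ((m : ℂ) + 1) • z = (m + 1) • z := by
    intro m z
    rw [← Nat.cast_smul_eq_nsmul ℂ (m + 1) z]
    push_cast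
    ring_nf
  simp only [LinearMap.smul_apply, LinearMap.sum_apply, Module.End.mul_apply, Cop,
    LinearMap.coe_comp, Function.comp_apply, LinearMap.coe_restrictScalars,
    Polynomial.lcoeff_apply, AlgHom.toLinearMap_apply, D, Derivation.coeFn_coe]
  rw [cast1]
  rw [h]
  exact Finset.sum_congr rfl fun j _ => (cast1 j _).symm

lemma Cop_mem_S1 (n : ℕ) : ∀ m, m ≤ n →
    Cop m ∈ Algebra.adjoin ℂ {x : Module.End ℂ LambdaP | ∃ k : ℕ+, (k : ℕ) ≤ n ∧ x = D k} := by
  intro m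
  induction m using Nat.strong_induction_on with
  | _ m ih =>
    intro hmn
    match m, ih, hmn with
    | 0, ih, hmn => rw [Cop_zero]; exact one_mem _
    | (m' + 1), ih, hmn =>
      have hc : ((m' : ℂ) + 1) ≠ 0 := Nat.cast_add_one_ne_zero m'
      rw [← inv_smul_smul₀ hc (Cop (m' + 1)), op_rec m']
      refine Subalgebra.smul_mem _ (Subalgebra.sum_mem _ fun j hj =>
        Subalgebra.smul_mem _ (mul_mem ?_ ?_) _) _
      · exact ih (m' - j) (Nat.lt_succ_of_le (Nat.sub_le _ _))
          (le_trans (Nat.sub_le _ _) (Nat.le_of_succ_le hmn))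
      · refine Algebra.subset_adjoin ⟨⟨j + 1, j.succ_pos⟩, ?_, rfl⟩
        have hj' : j < m' + 1 := Finset.mem_range.mp hj
        exact le_trans (by exact_mod_cast hj') hmn

lemma Cop_mem_S2 (n m : ℕ) (hmn : m ≤ n) :
    Cop m ∈ Algebra.adjoin ℂ
      {x : Module.End ℂ LambdaP | ∃ k : ℕ, 1 ≤ k ∧ k ≤ n ∧ x = T k} := by
  match m with
  | 0 => rw [Cop_zero]; exact one_mem _
  | (m' + 1) =>
    rw [Cop_eq]
    refine Subalgebra.smul_mem _ (Algebra.subset_adjoin ?_) _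
    exact ⟨m' + 1, Nat.succ_le_succ (Nat.zero_le _), hmn, rfl⟩

lemma D_mem_S2 (n : ℕ) : ∀ (k : ℕ+), (k : ℕ) ≤ n →
    D k ∈ Algebra.adjoin ℂ
      {x : Module.End ℂ LambdaP | ∃ m : ℕ, 1 ≤ m ∧ m ≤ n ∧ x = T m} := by
  suffices H : ∀ m : ℕ, ∀ k : ℕ+, (k : ℕ) = m → m ≤ n → D k ∈ Algebra.adjoin ℂ
      {x : Module.End ℂ LambdaP | ∃ m : ℕ, 1 ≤ m ∧ m ≤ n ∧ x = T m} by
    exact fun k hk => H (k : ℕ) k rfl hk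
  intro m
  induction m using Nat.strong_induction_on with
  | _ m ih =>
    intro k hkm hmn
    match m, ih, hkm, hmn with
    | 0, _, hkm, _ => exact absurd hkm k.pos.ne'
    | (m' + 1), ih, hkm, hmn =>
      have hc : ((m' : ℂ) + 1) ≠ 0 := Nat.cast_add_one_ne_zero m'
      have hrec := op_rec m'
      rw [Finset.sum_range_succ] at hrec
      simp only [Nat.sub_self, Cop_zero, one_mul] at hrec
      have hk' : (⟨m' + 1, m'.succ_pos⟩ : ℕ+) = k := PNat.coe_injective (by simp [hkm])
      rw [hk'] at hrec
      have hD : D k = ((m' : ℂ) + 1)⁻¹ • (((m' : ℂ) + 1) • Cop (m' + 1) -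
          ∑ j ∈ Finset.range m', ((j : ℂ) + 1) • (Cop (m' - j) * D ⟨j + 1, j.succ_pos⟩)) := by
        rw [hrec, add_sub_cancel_left, inv_smul_smul₀ hc]
      rw [hD]
      refine Subalgebra.smul_mem _ (sub_mem (Subalgebra.smul_mem _ ?_ _)
        (Subalgebra.sum_mem _ fun j hj => Subalgebra.smul_mem _ (mul_mem ?_ ?_) _)) _
      · exact Cop_mem_S2 n (m' + 1) hmn
      · exact Cop_mem_S2 n (m' - j) (le_trans (Nat.sub_le _ _) (Nat.le_of_succ_le hmn))
      · have hj' : j < m' := Finset.mem_range.mp hj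
        exact ih (j + 1) (Nat.succ_lt_succ hj') _ rfl
          (le_trans (Nat.succ_le_of_lt hj') (Nat.le_of_succ_le hmn))


/-- The unital ℂ-subalgebra of `End ℂ Λp` generated by the `∂/∂p_k` (`k ≥ 1`) equals
the one generated by the `T_n` (`n ≥ 1`); moreover for each `n ≥ 1` the subalgebras
generated by `{∂/∂p_1, …, ∂/∂p_n}` and `{T_1, …, T_n}` coincide. -/
theorem statement15 :
    Algebra.adjoin ℂ (Set.range D) =
      Algebra.adjoin ℂ {x : Module.End ℂ LambdaP | ∃ n : ℕ, 1 ≤ n ∧ x = T n} ∧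
    ∀ n : ℕ, 1 ≤ n →
      Algebra.adjoin ℂ {x : Module.End ℂ LambdaP | ∃ k : ℕ+, (k : ℕ) ≤ n ∧ x = D k} =
      Algebra.adjoin ℂ {x : Module.End ℂ LambdaP | ∃ k : ℕ, 1 ≤ k ∧ k ≤ n ∧ x = T k} := by
  constructor
  · apply le_antisymm
    · apply Algebra.adjoin_le
      rintro x ⟨k, rfl⟩
      refine Algebra.adjoin_mono ?_ (D_mem_S2 (k : ℕ) k le_rfl)
      rintro y ⟨m, hm1, _, rfl⟩
      exact ⟨m, hm1, rfl⟩
    · apply Algebra.adjoin_le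
      rintro x ⟨m, hm1, rfl⟩
      rw [T_eq]
      refine Subalgebra.smul_mem _ (Algebra.adjoin_mono ?_ (Cop_mem_S1 m m le_rfl)) _
      rintro y ⟨k, _, rfl⟩
      exact ⟨k, rfl⟩
  · intro n _
    apply le_antisymm
    · apply Algebra.adjoin_le
      rintro x ⟨k, hk, rfl⟩
      exact D_mem_S2 n k hk
    · apply Algebra.adjoin_le
      rintro x ⟨m, _, hmn, rfl⟩
      rw [T_eq]
      exact Subalgebra.smul_mem _ (Cop_mem_S1 n m hmn) _
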